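/- Suppose m = 2, d = 1 (so e = 4, s = 2) and a^{(q-1)/(p+1)} = 1. Then the defining set D_0 has size p^2 - 1, the set of distinct codewords {c_b : b ∈ F_q} has exactly p^2 elements, each codeword arises from exactly p^2 values of b ∈ F_q, and every nonzero codeword c_b has Hamming weight exactly (p-1)·p; in particular the code C_{D_0} is a [p^2 - 1, 2, (p-1)p] one-weight linear code over F_p. -/

import Mathlib

open Finset

lemma aux_cyclic_count {G : Type*} [CommGroup G] [Fintype G] [DecidableEq G] [IsCyclic G]
    (n mm : ℕ) (hn : 0 < n) (hmm : 0 < mm) (hcard : Fintype.card G = n * mm)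
    (c : G) (hc : c ^ mm = 1) :
    (Finset.univ.filter (fun x => x ^ n = c)).card = n := by
  obtain ⟨g, hg⟩ := IsCyclic.exists_generator (α := G)
  have horder : orderOf g = n * mm := by
    rw [orderOf_eq_card_of_forall_mem_zpowers hg, Nat.card_eq_fintype_card, hcard]
  -- card of solutions of x^n = 1 is n
  have hone : (Finset.univ.filter (fun x : G => x ^ n = 1)).card = n := by
    apply le_antisymm
    · simpa using IsCyclic.card_pow_eq_one_le (α := G) hn
    · have hord : orderOf (g ^ mm) = n := by
        rw [orderOf_pow' _ hmm.ne', horder, Nat.gcd_eq_right (dvd_mul_left mm n),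
          Nat.mul_div_cancel _ hmm]
      calc n = Fintype.card (Subgroup.zpowers (g ^ mm)) := by
              rw [Fintype.card_zpowers, hord]
        _ = ((Finset.univ : Finset (Subgroup.zpowers (g ^ mm))).image Subtype.val).card := by
              rw [Finset.card_image_of_injective _ Subtype.val_injective, Finset.card_univ]
        _ ≤ _ := by
              apply Finset.card_le_card
              intro x hx
              simp only [Finset.mem_image, Finset.mem_univ, true_and] at hx
              obtain ⟨⟨y, hy⟩, _, rfl⟩ := hx
              obtain ⟨j, rfl⟩ := Subgroup.mem_zpowers_iff.mp hy
              simp only [mem_filter, mem_univ, true_and]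
              rw [← zpow_natCast, ← zpow_mul, mul_comm, zpow_mul]
              have : (g ^ mm) ^ (n : ℤ) = 1 := by
                rw [← zpow_natCast, ← zpow_mul, ← Nat.cast_mul, mul_comm mm n, zpow_natCast,
                  ← horder, pow_orderOf_eq_one]
              rw [this, one_zpow]
  -- c is an n-th power
  obtain ⟨t, ht⟩ : ∃ t : ℕ, g ^ t = c := mem_powers_iff_mem_zpowers.mpr (hg c)
  have hdvd : n ∣ t := by
    have h1 : g ^ (t * mm) = 1 := by rw [pow_mul, ht, hc]
    have h2 : orderOf g ∣ t * mm := orderOf_dvd_of_pow_eq_one h1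
    rw [horder] at h2
    exact (Nat.mul_dvd_mul_iff_right hmm).mp h2
  obtain ⟨u, rfl⟩ := hdvd
  have hx0 : (g ^ u) ^ n = c := by rw [← ht, ← pow_mul, mul_comm]
  have hbij : (Finset.univ.filter (fun x : G => x ^ n = c)).card
      = (Finset.univ.filter (fun x : G => x ^ n = 1)).card := by
    apply Finset.card_bij' (fun x _ => (g ^ u)⁻¹ * x) (fun x _ => g ^ u * x)
    · intro x hx
      simp only [mem_filter, mem_univ, true_and] at hx ⊢
      rw [mul_pow, hx, ← hx0, inv_pow, inv_mul_cancel]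
    · intro x hx
      simp only [mem_filter, mem_univ, true_and] at hx ⊢
      rw [mul_pow, hx, hx0, mul_one]
    · intros; group
    · intros; group
  rw [hbij, hone]

section Aux2
variable (p : ℕ) [Fact p.Prime] (F : Type*) [Field F] [Algebra (ZMod p) F]

noncomputable def kerSub (u v : F) (j : ℕ) : Submodule (ZMod p) F :=
  haveI : CharP F p :=
    charP_of_injective_algebraMap (algebraMap (ZMod p) F).injective p
  { carrier := {x : F | u * x ^ p ^ j = v * x}
    zero_mem' := by
      have hpj : p ^ j ≠ 0 := pow_ne_zero j (Fact.out : p.Prime).pos.ne'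
      simp [zero_pow hpj]
    add_mem' := by
      intro x y hx hy
      simp only [Set.mem_setOf_eq] at *
      rw [add_pow_char_pow]
      linear_combination hx + hy
    smul_mem' := by
      intro c x hx
      simp only [Set.mem_setOf_eq] at *
      rw [Algebra.smul_def, mul_pow, ← map_pow, ZMod.pow_card_pow]
      linear_combination (algebraMap (ZMod p) F c) * hx }

lemma mem_kerSub (u v : F) (j : ℕ) (x : F) :
    x ∈ kerSub p F u v j ↔ u * x ^ p ^ j = v * x := Iff.rfl

end Aux2

lemma aux_card_solutions (p : ℕ) [Fact p.Prime] (F : Type*) [Field F] [Fintype F]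
    [DecidableEq F] (hcard : Fintype.card F = p ^ 4)
    (u v : F) (hu : u ≠ 0) (hv : v ≠ 0) (hcond : (v * u⁻¹) ^ (p ^ 2 + 1) = 1) :
    (Finset.univ.filter (fun x : F => u * x ^ p ^ 2 = v * x)).card = p ^ 2 := by
  have hp2 : 2 ≤ p := (Fact.out : p.Prime).two_le
  have hp21 : 1 ≤ p ^ 2 := Nat.one_le_pow _ _ (by omega)
  have hw : v * u⁻¹ ≠ 0 := mul_ne_zero hv (inv_ne_zero hu)
  set w : F := v * u⁻¹ with hwdef
  have hcardU : Fintype.card Fˣ = (p ^ 2 - 1) * (p ^ 2 + 1) := by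
    rw [Fintype.card_units, hcard]
    have h2 : p ^ 4 = p ^ 2 * p ^ 2 := by ring
    rw [h2]
    rcases Nat.exists_eq_add_of_le hp21 with ⟨t, ht⟩
    rw [ht]
    have e1 : (1 + t) * (1 + t) = t * t + 2 * t + 1 := by ring
    have e2 : 1 + t - 1 = t := by omega
    have e3 : t * (t + 2) = t * t + 2 * t := by ring
    rw [e1, e2]
    rw [show 1 + t + 1 = t + 2 from by omega, e3]
    omega
  have hone_lt : 1 < p ^ 2 := Nat.one_lt_pow (by norm_num) (by omega)
  have countU : (Finset.univ.filter (fun x : Fˣ => x ^ (p ^ 2 - 1) = Units.mk0 w hw)).card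
      = p ^ 2 - 1 := by
    apply aux_cyclic_count _ _ (by omega) (by omega) hcardU
    ext
    push_cast
    exact hcond
  -- bridge to F
  have countF : (Finset.univ.filter (fun x : F => x ≠ 0 ∧ x ^ (p ^ 2 - 1) = w)).card
      = p ^ 2 - 1 := by
    refine Eq.trans ?_ countU
    refine Finset.card_bij' (fun x hx => Units.mk0 x ?_) (fun x _ => (x : F)) ?_ ?_ ?_ ?_
    · exact ((Finset.mem_filter.mp hx).2).1
    · intro x hx
      simp only [Finset.mem_filter, Finset.mem_univ, true_and] at hx ⊢
      ext
      push_cast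
      exact hx.2
    · intro x hx
      simp only [Finset.mem_filter, Finset.mem_univ, true_and] at hx ⊢
      constructor
      · exact x.ne_zero
      · have := congrArg (Units.val) hx
        push_cast at this
        exact this
    · intros; simp
    · intros; ext; simp
  -- main set = {0} ∪ nonzero solutions
  have hset : (Finset.univ.filter (fun x : F => u * x ^ p ^ 2 = v * x))
      = insert (0 : F) (Finset.univ.filter (fun x : F => x ≠ 0 ∧ x ^ (p ^ 2 - 1) = w)) := by
    ext x
    simp only [Finset.mem_filter, Finset.mem_univ, true_and, Finset.mem_insert]
    constructor
    · intro hx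
      rcases eq_or_ne x 0 with rfl | hx0
      · left; rfl
      · right
        refine ⟨hx0, ?_⟩
        have hxp : x ^ p ^ 2 = x ^ (p ^ 2 - 1) * x := by
          rw [← pow_succ, Nat.sub_add_cancel hp21]
        rw [hxp, ← mul_assoc] at hx
        rw [hwdef, eq_mul_inv_iff_mul_eq₀ hu]
        rw [mul_comm (x ^ (p ^ 2 - 1)) u]
        exact mul_right_cancel₀ hx0 hx
    · intro hx
      rcases hx with rfl | ⟨hx0, hx⟩
      · have hpj : p ^ 2 ≠ 0 := by positivity
        simp [zero_pow hpj]
      · have hxp : x ^ p ^ 2 = x ^ (p ^ 2 - 1) * x := by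
          rw [← pow_succ, Nat.sub_add_cancel hp21]
        rw [hxp, hx, hwdef]
        field_simp
  rw [hset, Finset.card_insert_of_notMem (by simp), countF]
  omega

set_option maxHeartbeats 1000000 in
/-- Corollary 1: for `m = 2`, `d = 1` (so `e = 4`, `s = 2`) and `a^((q-1)/(p+1)) = 1`,
the code `C_{D_0}` is a `[p^2 - 1, 2, (p-1)p]` one-weight linear code, each codeword
arising from exactly `p^2` values of `b`. -/
theorem stmt_4
    (p e k d m s : ℕ) [Fact p.Prime] (hp2 : p ≠ 2)
    (hk : 0 < k) (he : 0 < e)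
    (hd : d = Nat.gcd k e) (heven : Even (e / d))
    (hem : e = 2 * m) (hsd : s = m / d) (hm : m = 2) (hd1 : d = 1)
    (F : Type*) [Field F] [Fintype F] [DecidableEq F] [Algebra (ZMod p) F]
    (hcard : Fintype.card F = p ^ e)
    (a : F) (ha : a ≠ 0)
    (hcase : a ^ ((p ^ e - 1) / (p ^ d + 1)) = 1) :
    let Tr : F → ZMod p := fun x => Algebra.trace (ZMod p) F x
    let D0 : Finset F :=
      Finset.univ.filter (fun x => x ≠ 0 ∧ Tr (a * x ^ (p ^ k + 1)) = 0)
    let wt : F → ℕ := fun b => (D0.filter (fun x => Tr (b * x) ≠ 0)).card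
    -- length
    (D0.card = p ^ 2 - 1)
    -- the set of distinct codewords has exactly p^2 elements
    ∧ (Finset.univ.image (fun b : F => fun x : {x : F // x ∈ D0} => Tr (b * x.1))).card = p ^ 2
    -- each codeword arises from exactly p^2 values of b
    ∧ (∀ b : F,
        (Finset.univ.filter (fun b' : F => ∀ x ∈ D0, Tr (b' * x) = Tr (b * x))).card = p ^ 2)
    -- every nonzero codeword has Hamming weight (p-1)·p
    ∧ (∀ b : F, (∃ x ∈ D0, Tr (b * x) ≠ 0) → wt b = (p - 1) * p) := by
  intro Tr D0 wt
  subst hm hem hd1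
  have hp2le : 2 ≤ p := (Fact.out : p.Prime).two_le
  have hpodd : Odd p := (Fact.out : p.Prime).odd_of_ne_two hp2
  haveI instCharP : CharP F p :=
    charP_of_injective_algebraMap (algebraMap (ZMod p) F).injective p
  have hcard4 : Fintype.card F = p ^ 4 := by rw [hcard]
  have hkodd : k % 2 = 1 := by
    rcases Nat.even_or_odd k with hke | hko
    · exfalso
      have h2 : 2 ∣ Nat.gcd k (2 * 2) := Nat.dvd_gcd hke.two_dvd (by norm_num)
      rw [← hd] at h2
      norm_num at h2
    · exact Nat.odd_iff.mp hko
  set r := k % 4 with hrdef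
  have hr13 : r = 1 ∨ r = 3 := by omega
  have hrle : r ≤ 3 := by omega
  have hq4 : ∀ x : F, x ^ p ^ 4 = x := by
    intro x
    rw [← hcard4]
    exact FiniteField.pow_card x
  have hmul : ∀ (x : F) (i j : ℕ), (x ^ p ^ i) ^ p ^ j = x ^ p ^ (i + j) := by
    intro x i j
    rw [← pow_mul, ← pow_add]
  have hred : ∀ (x : F) (i : ℕ), x ^ p ^ (4 + i) = x ^ p ^ i := by
    intro x i
    rw [pow_add, pow_mul, hq4]
  have hkr : ∀ x : F, x ^ p ^ k = x ^ p ^ r := by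
    have key : ∀ (t i : ℕ) (x : F), x ^ p ^ (4 * t + i) = x ^ p ^ i := by
      intro t
      induction t with
      | zero => intro i x; norm_num
      | succ n ih =>
        intro i x
        have h1 : 4 * (n + 1) + i = 4 + (4 * n + i) := by ring
        rw [h1, hred, ih]
    intro x
    conv_lhs => rw [show k = 4 * (k / 4) + r from by omega]
    exact key _ _ x
  have hsq : ∀ x : F, (x ^ p ^ r) ^ p ^ r = x ^ p ^ 2 := by
    intro x
    rcases hr13 with hr | hr
    · rw [hr, hmul]
    · rw [hr, hmul]
      exact hred x 2
  have hinv : ∀ x : F, (x ^ p ^ r) ^ p ^ (4 - r) = x := by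
    intro x
    rw [hmul, show r + (4 - r) = 4 from by omega, hq4]
  have hinv' : ∀ x : F, (x ^ p ^ (4 - r)) ^ p ^ r = x := by
    intro x
    rw [hmul, show 4 - r + r = 4 from by omega, hq4]
  -- the power condition on a
  have hA : a ^ ((p - 1) * (p ^ 2 + 1)) = 1 := by
    have hdiv : (p ^ (2 * 2) - 1) / (p ^ 1 + 1) = (p - 1) * (p ^ 2 + 1) := by
      apply Nat.div_eq_of_eq_mul_left (by omega : 0 < p ^ 1 + 1)
      have h1 : 1 ≤ p := by omega
      have h4 : 1 ≤ p ^ (2 * 2) := Nat.one_le_pow _ _ (by omega)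
      zify [h1, h4]
      push_cast
      ring
    rw [hdiv] at hcase
    exact hcase
  have hRj : ∀ j : ℕ, a ^ (p ^ j * (p ^ 2 + 1)) = a ^ (p ^ 2 + 1) := by
    intro j
    induction j with
    | zero => norm_num
    | succ n ih =>
      have h1 : p ^ (n + 1) * (p ^ 2 + 1) = p ^ n * (p ^ 2 + 1) * p := by ring
      rw [h1, pow_mul, ih, ← pow_mul]
      have h2 : (p ^ 2 + 1) * p = (p - 1) * (p ^ 2 + 1) + (p ^ 2 + 1) := by
        have h1p : 1 ≤ p := by omega
        zify [h1p]
        ring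
      rw [h2, pow_add, hA, one_mul]
  -- trace and frobenius
  have hfrobAlg : ∃ efr : F ≃ₐ[ZMod p] F, ∀ x : F, efr x = x ^ p := by
    have hbij : Function.Bijective (frobenius F p) :=
      Finite.injective_iff_bijective.mp (frobenius_inj F p)
    refine ⟨AlgEquiv.ofBijective ⟨frobenius F p, fun c => ?_⟩ hbij, fun x => rfl⟩
    show frobenius F p (algebraMap (ZMod p) F c) = algebraMap (ZMod p) F c
    rw [frobenius_def, ← map_pow, ZMod.pow_card]
  obtain ⟨efr, hefr⟩ := hfrobAlg
  have htrp : ∀ x : F, Tr (x ^ p) = Tr x := by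
    intro x
    have := Algebra.trace_eq_of_algEquiv efr x
    rw [hefr] at this
    exact this
  have htrppow : ∀ (j : ℕ) (x : F), Tr (x ^ p ^ j) = Tr x := by
    intro j
    induction j with
    | zero => intro x; norm_num
    | succ n ih =>
      intro x
      have h1 : x ^ p ^ (n + 1) = (x ^ p ^ n) ^ p := by rw [← pow_mul, ← pow_succ]
      rw [h1, htrp, ih]
  -- finite dimensionality
  have hfinrank : Module.finrank (ZMod p) F = 4 := by
    have hc := Module.card_eq_pow_finrank (K := ZMod p) (V := F)
    rw [hcard4, ZMod.card] at hc
    exact (Nat.pow_right_injective hp2le hc).symm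
  have h2ne : (2 : ZMod p) ≠ 0 := by
    intro h
    have h' : ((2 : ℕ) : ZMod p) = 0 := by exact_mod_cast h
    rw [ZMod.natCast_eq_zero_iff] at h'
    have := Nat.le_of_dvd (by norm_num) h'
    omega
  have h4ne : (4 : ZMod p) ≠ 0 := by
    intro h
    have h' : ((4 : ℕ) : ZMod p) = 0 := by exact_mod_cast h
    rw [ZMod.natCast_eq_zero_iff] at h'
    have h'' : p ∣ 2 ^ 2 := by norm_num at h' ⊢; exact h'
    have := Nat.le_of_dvd (by norm_num) ((Fact.out : p.Prime).dvd_of_dvd_pow h'')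
    omega
  have htr_alg : ∀ lam : ZMod p, Tr (algebraMap (ZMod p) F lam) = 4 * lam := by
    intro lam
    show Algebra.trace (ZMod p) F _ = _
    rw [Algebra.trace_algebraMap, hfinrank]
    rw [nsmul_eq_mul]
    norm_num
  -- fixed points of frobenius are in the prime field
  have hfixed : ∀ v : F, v ^ p = v → ∃ lam : ZMod p, algebraMap (ZMod p) F lam = v := by
    intro v hv
    classical
    set S : Finset F := Finset.univ.filter (fun x : F => x ^ p = x) with hS
    set T : Finset F := Finset.univ.image (algebraMap (ZMod p) F) with hT
    have hTS : T ⊆ S := by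
      intro x hx
      simp only [hT, Finset.mem_image, Finset.mem_univ, true_and] at hx
      obtain ⟨lam, rfl⟩ := hx
      simp only [hS, Finset.mem_filter, Finset.mem_univ, true_and]
      rw [← map_pow, ZMod.pow_card]
    have hcardT : T.card = p := by
      rw [hT, Finset.card_image_of_injective _ (algebraMap (ZMod p) F).injective,
        Finset.card_univ, ZMod.card]
    have hcardS : S.card ≤ p := by
      have hne : (Polynomial.X ^ p - Polynomial.X : Polynomial F) ≠ 0 :=
        FiniteField.X_pow_card_sub_X_ne_zero F (by omega : 1 < p)
      have hdeg : (Polynomial.X ^ p - Polynomial.X : Polynomial F).natDegree = p :=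
        FiniteField.X_pow_card_sub_X_natDegree_eq F (by omega : 1 < p)
      calc S.card ≤ (Polynomial.X ^ p - Polynomial.X : Polynomial F).roots.toFinset.card := by
            apply Finset.card_le_card
            intro x hx
            simp only [hS, Finset.mem_filter, Finset.mem_univ, true_and] at hx
            rw [Multiset.mem_toFinset, Polynomial.mem_roots hne]
            simp [Polynomial.IsRoot, hx]
        _ ≤ Multiset.card (Polynomial.X ^ p - Polynomial.X : Polynomial F).roots :=
            Multiset.toFinset_card_le _
        _ ≤ (Polynomial.X ^ p - Polynomial.X : Polynomial F).natDegree :=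
            Polynomial.card_roots' _
        _ = p := hdeg
    have hST : S = T := (Finset.eq_of_subset_of_card_le hTS (by omega)).symm
    have hvS : v ∈ S := by simp [hS, hv]
    rw [hST, hT] at hvS
    simp only [Finset.mem_image, Finset.mem_univ, true_and] at hvS
    exact hvS
  -- the key quadratic-form computations
  have hV2 : ∀ (ε y : F), (ε = 1 ∨ ε = -1) → a ^ p ^ r * y ^ p ^ 2 = ε * (a * y) →
      (a * (y ^ p ^ r * y)) ^ (p + 1) = ε * (a * (y ^ p ^ r * y)) ^ 2 := by
    intro ε y hε hy
    have hε2 : ε * ε = 1 := by rcases hε with rfl | rfl <;> ring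
    have hεp : ε ^ p = ε := by
      rcases hε with rfl | rfl
      · simp
      · exact hpodd.neg_one_pow
    rcases hr13 with hr | hr
    · -- r = 1
      rw [hr] at hy ⊢
      simp only [pow_one] at hy ⊢
      have hpp : (y ^ p) ^ p = y ^ p ^ 2 := by
        have h := hmul y 1 1
        norm_num at h
        exact h
      rw [pow_succ, mul_pow, mul_pow, hpp]
      linear_combination (a * (y ^ p * (y ^ p * y))) * hy
    · -- r = 3
      rw [hr] at hy ⊢
      have h31 : (y ^ p ^ 3) ^ p = y := by
        have h := hmul y 3 1
        norm_num at h
        exact h.trans (hq4 y)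
      have h21 : (y ^ p ^ 2) ^ p = y ^ p ^ 3 := by
        have h := hmul y 2 1
        norm_num at h
        exact h
      have h3a : (a ^ p ^ 3) ^ p = a := by
        have h := hmul a 3 1
        norm_num at h
        exact h.trans (hq4 a)
      have E2 : a * y ^ p ^ 3 = ε * (a ^ p * y ^ p) := by
        have h := congrArg (fun w : F => w ^ p) hy
        simp only [mul_pow] at h
        rw [h3a, h21, hεp] at h
        exact h
      rw [pow_succ, mul_pow, mul_pow, h31]
      linear_combination (-(ε * y ^ 2 * (a * y ^ p ^ 3))) * E2 +
        (-(a ^ p * y ^ p * y ^ 2 * (a * y ^ p ^ 3))) * hε2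
  have hQzero : ∀ z : F, a ^ p ^ r * z ^ p ^ 2 = -a * z → Tr (a * (z ^ p ^ r * z)) = 0 := by
    intro z hz
    have hrel : a ^ p ^ r * z ^ p ^ 2 = (-1 : F) * (a * z) := by linear_combination hz
    have hVp := hV2 (-1) z (Or.inr rfl) hrel
    set v := a * (z ^ p ^ r * z) with hv
    have hvp : v ^ p = -v := by
      rcases eq_or_ne v 0 with h0 | h0
      · rw [h0, zero_pow (by omega : p ≠ 0), neg_zero]
      · have h1 : v ^ p * v = -v * v := by
          rw [← pow_succ, hVp]
          ring
        exact mul_right_cancel₀ h0 h1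
    have h1 : Tr v = Tr (-v) := by rw [← hvp, htrp]
    have h2 : Tr (-v) = -Tr v := map_neg (Algebra.trace (ZMod p) F) v
    have h3 : (2 : ZMod p) * Tr v = 0 := by linear_combination h1.trans h2
    exact (mul_eq_zero.mp h3).resolve_left h2ne
  have hQnonzero : ∀ y : F, y ≠ 0 → a ^ p ^ r * y ^ p ^ 2 = a * y →
      Tr (a * (y ^ p ^ r * y)) ≠ 0 := by
    intro y hy0 hyrel
    have hrel : a ^ p ^ r * y ^ p ^ 2 = (1 : F) * (a * y) := by linear_combination hyrel
    have hVp := hV2 1 y (Or.inl rfl) hrel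
    set v := a * (y ^ p ^ r * y) with hv
    have hvne : v ≠ 0 := mul_ne_zero ha (mul_ne_zero (pow_ne_zero _ hy0) hy0)
    have hvp : v ^ p = v := by
      have h1 : v ^ p * v = v * v := by
        rw [← pow_succ, hVp]
        ring
      exact mul_right_cancel₀ hvne h1
    obtain ⟨lam, hlam⟩ := hfixed v hvp
    have hlamne : lam ≠ 0 := by
      rintro rfl
      rw [map_zero] at hlam
      exact hvne hlam.symm
    rw [← hlam, htr_alg]
    exact mul_ne_zero h4ne hlamne
  have hM0 : ∀ z : F, a ^ p ^ r * z ^ p ^ 2 = -a * z →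
      a * z ^ p ^ r + a ^ p ^ (4 - r) * z ^ p ^ (4 - r) = 0 := by
    intro z hz
    have hpow : (a * z ^ p ^ r + a ^ p ^ (4 - r) * z ^ p ^ (4 - r)) ^ p ^ r = 0 := by
      rw [add_pow_char_pow]
      simp only [mul_pow]
      rw [hsq z, hinv' a, hinv' z, hz]
      ring
    exact pow_eq_zero_iff (pow_ne_zero r (by omega : p ≠ 0)) |>.mp hpow
  have hTadd : ∀ u w : F, Tr (u + w) = Tr u + Tr w :=
    fun u w => map_add (Algebra.trace (ZMod p) F) u w
  have hcross : ∀ z y : F, a ^ p ^ r * z ^ p ^ 2 = -a * z →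
      Tr (a * ((z + y) ^ p ^ r * (z + y))) = Tr (a * (y ^ p ^ r * y)) := by
    intro z y hz
    have hexp : a * ((z + y) ^ p ^ r * (z + y))
        = a * (z ^ p ^ r * z) + (a * (y ^ p ^ r * y)
          + (a * (z ^ p ^ r * y) + a * (y ^ p ^ r * z))) := by
      rw [add_pow_char_pow]
      ring
    rw [hexp, hTadd, hTadd, hTadd, hQzero z hz]
    have hc2 : Tr (a * (y ^ p ^ r * z)) = Tr (a ^ p ^ (4 - r) * (z ^ p ^ (4 - r) * y)) := by
      rw [← htrppow (4 - r) (a * (y ^ p ^ r * z))]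
      congr 1
      simp only [mul_pow]
      rw [hinv y]
      ring
    rw [hc2]
    have hsum : Tr (a * (z ^ p ^ r * y)) + Tr (a ^ p ^ (4 - r) * (z ^ p ^ (4 - r) * y)) = 0 := by
      rw [← hTadd]
      have harg : a * (z ^ p ^ r * y) + a ^ p ^ (4 - r) * (z ^ p ^ (4 - r) * y)
          = (a * z ^ p ^ r + a ^ p ^ (4 - r) * z ^ p ^ (4 - r)) * y := by ring
      rw [harg, hM0 z hz, zero_mul]
      exact map_zero (Algebra.trace (ZMod p) F)
    linear_combination hsum
  classical
  have hQr : ∀ x : F, a * x ^ (p ^ k + 1) = a * (x ^ p ^ r * x) := by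
    intro x
    rw [pow_succ, hkr]
  set Kk := kerSub p F (a ^ p ^ r) (-a) 2 with hKdef
  set Kk' := kerSub p F (a ^ p ^ r) a 2 with hK'def
  have hmemK : ∀ x : F, x ∈ Kk ↔ a ^ p ^ r * x ^ p ^ 2 = -a * x := fun x => Iff.rfl
  have hmemK' : ∀ x : F, x ∈ Kk' ↔ a ^ p ^ r * x ^ p ^ 2 = a * x := fun x => Iff.rfl
  have hcond' : (a * (a ^ p ^ r)⁻¹) ^ (p ^ 2 + 1) = 1 := by
    rw [mul_pow, inv_pow, ← pow_mul, hRj r]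
    exact mul_inv_cancel₀ (pow_ne_zero _ ha)
  have hcondneg : ((-a) * (a ^ p ^ r)⁻¹) ^ (p ^ 2 + 1) = 1 := by
    have hev : Even (p ^ 2 + 1) := (hpodd.pow).add_one
    rw [neg_mul, hev.neg_pow, hcond']
  have cardKF : (Finset.univ.filter (fun x : F => a ^ p ^ r * x ^ p ^ 2 = -a * x)).card
      = p ^ 2 :=
    aux_card_solutions p F hcard4 _ _ (pow_ne_zero _ ha) (neg_ne_zero.mpr ha) hcondneg
  have cardKF' : (Finset.univ.filter (fun x : F => a ^ p ^ r * x ^ p ^ 2 = a * x)).card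
      = p ^ 2 :=
    aux_card_solutions p F hcard4 _ _ (pow_ne_zero _ ha) ha hcond'
  have hfilterK : Finset.univ.filter (fun x : F => x ∈ Kk)
      = Finset.univ.filter (fun x : F => a ^ p ^ r * x ^ p ^ 2 = -a * x) :=
    Finset.filter_congr (fun x _ => hmemK x)
  have hfilterK' : Finset.univ.filter (fun x : F => x ∈ Kk')
      = Finset.univ.filter (fun x : F => a ^ p ^ r * x ^ p ^ 2 = a * x) :=
    Finset.filter_congr (fun x _ => hmemK' x)
  have hKcard : Nat.card Kk = p ^ 2 := by
    rw [Nat.card_eq_fintype_card, Fintype.card_subtype]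
    rw [← cardKF, ← hfilterK]
  have hK'card : Nat.card Kk' = p ^ 2 := by
    rw [Nat.card_eq_fintype_card, Fintype.card_subtype]
    rw [← cardKF', ← hfilterK']
  have hKK'0 : ∀ x : F, x ∈ Kk → x ∈ Kk' → x = 0 := by
    intro x h1 h2
    have e1 : a ^ p ^ r * x ^ p ^ 2 = -a * x := h1
    have e2 : a ^ p ^ r * x ^ p ^ 2 = a * x := h2
    have h0 : (2 : F) * (a * x) = 0 := by linear_combination e1 - e2
    have h2F : (2 : F) ≠ 0 := by
      intro h
      apply h2ne
      apply (algebraMap (ZMod p) F).injective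
      rw [map_ofNat, map_zero]
      exact h
    simpa [mul_eq_zero, h2F, ha] using h0
  have hsum_bij : Function.Bijective (fun w : Kk × Kk' => (w.1 : F) + (w.2 : F)) := by
    rw [Nat.bijective_iff_injective_and_card]
    constructor
    · rintro ⟨⟨z1, hz1⟩, ⟨y1, hy1⟩⟩ ⟨⟨z2, hz2⟩, ⟨y2, hy2⟩⟩ hww
      simp only at hww
      have hdiff : z1 - z2 = y2 - y1 := by linear_combination hww
      have hzmem : z1 - z2 ∈ Kk := sub_mem hz1 hz2
      have hzmem' : z1 - z2 ∈ Kk' := hdiff ▸ sub_mem hy2 hy1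
      have h0 : z1 - z2 = 0 := hKK'0 _ hzmem hzmem'
      have h0' : y2 - y1 = 0 := by rw [← hdiff, h0]
      have hz12 : z1 = z2 := by linear_combination h0
      have hy12 : y1 = y2 := by linear_combination -h0'
      simp [Prod.ext_iff, Subtype.ext_iff, hz12, hy12]
    · rw [Nat.card_prod, hKcard, hK'card, Nat.card_eq_fintype_card, hcard4]
      ring
  have hdecomp : ∀ x : F, ∃ z y : F, z ∈ Kk ∧ y ∈ Kk' ∧ x = z + y := by
    intro x
    obtain ⟨⟨z, y⟩, hw⟩ := hsum_bij.2 x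
    exact ⟨z, y, z.2, y.2, hw.symm⟩
  have hQiff : ∀ x : F, (Tr (a * x ^ (p ^ k + 1)) = 0 ↔ x ∈ Kk) := by
    intro x
    obtain ⟨z, y, hz, hy, rfl⟩ := hdecomp x
    have hzrel : a ^ p ^ r * z ^ p ^ 2 = -a * z := hz
    rw [hQr, hcross z y hzrel]
    constructor
    · intro h0
      rcases eq_or_ne y 0 with rfl | hy0
      · simpa using hz
      · exact absurd h0 (hQnonzero y hy0 hy)
    · intro hmem
      have hymem : y ∈ Kk := by
        have hsub : (z + y) - z ∈ Kk := sub_mem hmem hz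
        simpa using hsub
      have hy0 : y = 0 := hKK'0 y hymem hy
      subst hy0
      rw [zero_pow (pow_ne_zero r (by omega : p ≠ 0)), zero_mul, mul_zero]
      exact map_zero (Algebra.trace (ZMod p) F)
  have hD0mem : ∀ x : F, x ∈ D0 ↔ x ≠ 0 ∧ x ∈ Kk := by
    intro x
    simp only [D0, Finset.mem_filter, Finset.mem_univ, true_and]
    exact and_congr_right (fun _ => hQiff x)
  have hD0eq : D0 = (Finset.univ.filter (fun x : F => x ∈ Kk)).erase 0 := by
    ext x
    rw [hD0mem x, Finset.mem_erase, Finset.mem_filter]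
    simp [and_comm]
  have part1 : D0.card = p ^ 2 - 1 := by
    rw [hD0eq, Finset.card_erase_of_mem (by simp [zero_mem]), hfilterK, cardKF]
  -- instances for trace form nondegeneracy
  haveI : Algebra.IsSeparable (ZMod p) F := inferInstance
  -- the orthogonal complement of Kk
  set Ψ : F →ₗ[ZMod p] Module.Dual (ZMod p) ↥Kk :=
    Kk.dualRestrict.comp (Algebra.traceForm (ZMod p) F) with hΨdef
  have hΨapp : ∀ (c : F) (x : ↥Kk), Ψ c x = Tr (c * (x : F)) := fun c x => rfl
  have htF_inj : Function.Injective ⇑(Algebra.traceForm (ZMod p) F) := by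
    intro x y hxy
    have h0 : x - y = 0 := by
      apply (traceForm_nondegenerate (ZMod p) F).1 (x - y)
      intro n
      rw [map_sub, LinearMap.sub_apply, hxy, sub_self]
    linear_combination h0
  haveI : Finite (Module.Dual (ZMod p) F) :=
    Finite.of_injective (fun (f : Module.Dual (ZMod p) F) => (f : F → ZMod p))
      DFunLike.coe_injective
  have hdualcard : Nat.card (Module.Dual (ZMod p) F) = Nat.card F :=
    (Nat.card_congr (Module.finBasis (ZMod p) F).toDualEquiv.toEquiv).symm
  have hΨsurj : Function.Surjective ⇑Ψ := by
    rw [hΨdef, LinearMap.coe_comp]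
    have hbij : Function.Bijective ⇑(Algebra.traceForm (ZMod p) F) := by
      rw [Nat.bijective_iff_injective_and_card]
      exact ⟨htF_inj, hdualcard.symm⟩
    exact Function.Surjective.comp (Subspace.dualRestrict_surjective (W := Kk)) hbij.surjective
  have hkerΨ : ∀ c : F, Ψ c = 0 ↔ ∀ x ∈ D0, Tr (c * x) = 0 := by
    intro c
    constructor
    · intro h0 x hx
      have hxK : x ∈ Kk := ((hD0mem x).mp hx).2
      have := LinearMap.ext_iff.mp h0 ⟨x, hxK⟩
      rwa [hΨapp] at this
    · intro hall
      apply LinearMap.ext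
      rintro ⟨x, hxK⟩
      rcases eq_or_ne x 0 with rfl | hx0
      · have : Ψ c ⟨0, Kk.zero_mem⟩ = Tr (c * 0) := hΨapp c _
        rw [this, mul_zero]
        exact map_zero (Algebra.trace (ZMod p) F)
      · rw [hΨapp]
        exact hall x ((hD0mem x).mpr ⟨hx0, hxK⟩)
  have hfinK : Module.finrank (ZMod p) ↥Kk = 2 := by
    have hc := Module.card_eq_pow_finrank (K := ZMod p) (V := ↥Kk)
    rw [ZMod.card, ← Nat.card_eq_fintype_card, hKcard] at hc
    exact (Nat.pow_right_injective hp2le hc).symm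
  have hfinkerΨ : Module.finrank (ZMod p) ↥(LinearMap.ker Ψ) = 2 := by
    have hrn := LinearMap.finrank_range_add_finrank_ker Ψ
    rw [hfinrank, LinearMap.range_eq_top.mpr hΨsurj, finrank_top,
      Subspace.dual_finrank_eq, hfinK] at hrn
    omega
  have hZcard : (Finset.univ.filter (fun c : F => ∀ x ∈ D0, Tr (c * x) = 0)).card = p ^ 2 := by
    have h1 : (Finset.univ.filter (fun c : F => ∀ x ∈ D0, Tr (c * x) = 0))
        = Finset.univ.filter (fun c : F => c ∈ LinearMap.ker Ψ) := by
      apply Finset.filter_congr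
      intro c _
      rw [LinearMap.mem_ker]
      exact (hkerΨ c).symm
    rw [h1, ← Fintype.card_subtype]
    have hc := Module.card_eq_pow_finrank (K := ZMod p) (V := ↥(LinearMap.ker Ψ))
    rw [ZMod.card, hfinkerΨ] at hc
    exact hc
  -- part 3
  have part3 : ∀ b : F,
      (Finset.univ.filter (fun b' : F => ∀ x ∈ D0, Tr (b' * x) = Tr (b * x))).card = p ^ 2 := by
    intro b
    have hbij : (Finset.univ.filter (fun b' : F => ∀ x ∈ D0, Tr (b' * x) = Tr (b * x))).card
        = (Finset.univ.filter (fun c : F => ∀ x ∈ D0, Tr (c * x) = 0)).card := by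
      apply Finset.card_bij' (fun b' _ => b' - b) (fun c _ => c + b)
      · intro b' hb'
        simp only [Finset.mem_filter, Finset.mem_univ, true_and] at hb' ⊢
        intro x hx
        have h1 := hb' x hx
        have h2 : Tr ((b' - b) * x) = Tr (b' * x) - Tr (b * x) := by
          rw [sub_mul]
          exact map_sub (Algebra.trace (ZMod p) F) _ _
        rw [h2, h1, sub_self]
      · intro c hc
        simp only [Finset.mem_filter, Finset.mem_univ, true_and] at hc ⊢
        intro x hx
        have h1 := hc x hx
        have h2 : Tr ((c + b) * x) = Tr (c * x) + Tr (b * x) := by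
          rw [add_mul]
          exact map_add (Algebra.trace (ZMod p) F) _ _
        rw [h2, h1, zero_add]
      · intros; ring
      · intros; ring
    rw [hbij, hZcard]
  -- part 2
  have part2 : (Finset.univ.image
      (fun b : F => fun x : {x : F // x ∈ D0} => Tr (b * x.1))).card = p ^ 2 := by
    set f : F → ({x : F // x ∈ D0} → ZMod p) :=
      fun b => fun x : {x : F // x ∈ D0} => Tr (b * x.1) with hfdef
    have himg := Finset.card_eq_sum_card_image f Finset.univ
    have hfib : ∀ v ∈ Finset.univ.image f,
        (Finset.univ.filter (fun b => f b = v)).card = p ^ 2 := by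
      intro v hv
      obtain ⟨b, _, rfl⟩ := Finset.mem_image.mp hv
      have heq : Finset.univ.filter (fun b' => f b' = f b)
          = Finset.univ.filter (fun b' : F => ∀ x ∈ D0, Tr (b' * x) = Tr (b * x)) := by
        apply Finset.filter_congr
        intro b' _
        constructor
        · intro h x hx
          exact congrFun h ⟨x, hx⟩
        · intro h
          funext x
          exact h x.1 x.2
      rw [heq]
      exact part3 b
    rw [Finset.sum_congr rfl hfib, Finset.sum_const, smul_eq_mul, Finset.card_univ, hcard4]
      at himg
    have hp2pos : 0 < p ^ 2 := by positivity
    have h44 : p ^ 4 = p ^ 2 * p ^ 2 := by ring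
    rw [h44] at himg
    exact (Nat.eq_of_mul_eq_mul_right hp2pos himg).symm
  -- part 4
  have part4 : ∀ b : F, (∃ x ∈ D0, Tr (b * x) ≠ 0) → wt b = (p - 1) * p := by
    intro b hex
    obtain ⟨x0, hx0D, hx0ne⟩ := hex
    have hx0K : x0 ∈ Kk := ((hD0mem x0).mp hx0D).2
    set ℓ : ↥Kk →ₗ[ZMod p] ZMod p :=
      (Algebra.traceForm (ZMod p) F b).comp Kk.subtype with hℓdef
    have hℓapp : ∀ x : ↥Kk, ℓ x = Tr (b * (x : F)) := fun x => rfl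
    have hℓsurj : Function.Surjective ⇑ℓ := by
      intro t
      refine ⟨(t * (Tr (b * x0))⁻¹) • ⟨x0, hx0K⟩, ?_⟩
      rw [map_smul, smul_eq_mul, hℓapp, mul_assoc, inv_mul_cancel₀ hx0ne, mul_one]
    have hrn := LinearMap.finrank_range_add_finrank_ker ℓ
    rw [LinearMap.range_eq_top.mpr hℓsurj, finrank_top, hfinK, Module.finrank_self] at hrn
    have hfinkerℓ : Module.finrank (ZMod p) ↥(LinearMap.ker ℓ) = 1 := by omega
    have hkercard : Nat.card ↥(LinearMap.ker ℓ) = p := by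
      have hc := Module.card_eq_pow_finrank (K := ZMod p) (V := ↥(LinearMap.ker ℓ))
      rw [ZMod.card, hfinkerℓ, pow_one, ← Nat.card_eq_fintype_card] at hc
      exact hc
    have hScard : (Finset.univ.filter (fun x : F => x ∈ Kk ∧ Tr (b * x) = 0)).card = p := by
      have heqv : {x : ↥Kk // x ∈ LinearMap.ker ℓ} ≃ {x : F // x ∈ Kk ∧ Tr (b * x) = 0} := {
        toFun := fun w => ⟨(w.1 : F), w.1.2, by
          have := LinearMap.mem_ker.mp w.2
          rwa [hℓapp] at this⟩
        invFun := fun w => ⟨⟨w.1, w.2.1⟩, LinearMap.mem_ker.mpr (by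
          rw [hℓapp]
          exact w.2.2)⟩
        left_inv := fun w => rfl
        right_inv := fun w => rfl }
      calc (Finset.univ.filter (fun x : F => x ∈ Kk ∧ Tr (b * x) = 0)).card
          = Fintype.card {x : F // x ∈ Kk ∧ Tr (b * x) = 0} := (Fintype.card_subtype _).symm
        _ = Fintype.card {x : ↥Kk // x ∈ LinearMap.ker ℓ} := (Fintype.card_congr heqv).symm
        _ = Nat.card ↥(LinearMap.ker ℓ) := (Nat.card_eq_fintype_card).symm
        _ = p := hkercard
    have hzero_insert : Finset.univ.filter (fun x : F => x ∈ Kk ∧ Tr (b * x) = 0)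
        = insert (0 : F) (D0.filter (fun x => Tr (b * x) = 0)) := by
      ext x
      simp only [Finset.mem_filter, Finset.mem_univ, true_and, Finset.mem_insert]
      constructor
      · rintro ⟨hxK, hxT⟩
        rcases eq_or_ne x 0 with rfl | hx0
        · exact Or.inl rfl
        · exact Or.inr ⟨(hD0mem x).mpr ⟨hx0, hxK⟩, hxT⟩
      · rintro (rfl | ⟨hxD, hxT⟩)
        · refine ⟨Kk.zero_mem, ?_⟩
          rw [mul_zero]
          exact map_zero (Algebra.trace (ZMod p) F)
        · exact ⟨((hD0mem x).mp hxD).2, hxT⟩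
    have hnotmem : (0 : F) ∉ D0.filter (fun x => Tr (b * x) = 0) := by
      intro h0
      have := Finset.mem_filter.mp h0
      exact (((hD0mem 0).mp this.1).1) rfl
    rw [hzero_insert, Finset.card_insert_of_notMem hnotmem] at hScard
    have hzcount : (D0.filter (fun x => Tr (b * x) = 0)).card = p - 1 := by omega
    have hsplit := Finset.card_filter_add_card_filter_not
      (s := D0) (p := fun x => Tr (b * x) = 0)
    have hwt : wt b = (D0.filter (fun x => ¬ (Tr (b * x) = 0))).card := by
      simp only [wt, ne_eq]
    have hmulid : (p - 1) * p = p * p - 1 * p := Nat.sub_mul p 1 p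
    have hsq2 : p ^ 2 = p * p := by ring
    rw [hzcount, part1] at hsplit
    omega
  exact ⟨part1, part2, part3, part4⟩
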